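/- Let T ≥ 2, let F_t : ℝⁿ → ℝⁿ for t = 1, …, T−1 be continuously differentiable maps, fix x₀ ∈ ℝⁿ, and let Ψ be the residual map Ψ(X)_t = x_t − F_t(x_{t−1}) (with x₀ the fixed initial value). Then for any X = (x₁, …, x_{T−1}), the Newton update X⁺ = X − DΨ(X)^{−1} Ψ(X) is the unique tuple (x⁺₁, …, x⁺_{T−1}) satisfying the forward recursion x⁺₁ = F₁(x₀) and x⁺_t = F_t(x_{t−1}) + DF_t(x_{t−1})(x⁺_{t−1} − x_{t−1}) for 2 ≤ t ≤ T−1; i.e., Newton's method on Ψ can be computed by T−1 sequential Jacobian–vector products without forming or inverting the full Jacobian. -/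

import Mathlib

/-- For `T ≥ 2`, continuously differentiable `F_t : ℝⁿ → ℝⁿ`
(`t = 1, …, T−1`), fixed `x₀ ∈ ℝⁿ`, and the residual map `Ψ(X)_t = x_t − F_t(x_{t−1})`
(with `x₀` the fixed initial value) whose Fréchet derivative at `X` is the invertible
map `D`: the Newton update `X⁺ = X − DΨ(X)⁻¹ Ψ(X)` is the unique tuple satisfying the
forward recursion `x⁺₁ = F₁(x₀)` and
`x⁺_t = F_t(x_{t−1}) + DF_t(x_{t−1})(x⁺_{t−1} − x_{t−1})` for `2 ≤ t ≤ T−1`. -/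
theorem newton_update_equals_forward_recursion
    (n T : ℕ) (hT : 2 ≤ T)
    (F : Fin (T - 1) → EuclideanSpace ℝ (Fin n) → EuclideanSpace ℝ (Fin n))
    (hF : ∀ i, ContDiff ℝ 1 (F i))
    (x₀ : EuclideanSpace ℝ (Fin n))
    (Ψ : (Fin (T - 1) → EuclideanSpace ℝ (Fin n)) →
      Fin (T - 1) → EuclideanSpace ℝ (Fin n))
    (hΨ : ∀ X i, Ψ X i = X i - F i
      (if (i : ℕ) = 0 then x₀
       else X ⟨(i : ℕ) - 1, Nat.lt_of_le_of_lt (Nat.sub_le _ _) i.isLt⟩))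
    (X : Fin (T - 1) → EuclideanSpace ℝ (Fin n))
    (D : (Fin (T - 1) → EuclideanSpace ℝ (Fin n)) ≃L[ℝ]
      (Fin (T - 1) → EuclideanSpace ℝ (Fin n)))
    (hD : HasFDerivAt Ψ (D : (Fin (T - 1) → EuclideanSpace ℝ (Fin n)) →L[ℝ]
      (Fin (T - 1) → EuclideanSpace ℝ (Fin n))) X) :
    ∀ Y : Fin (T - 1) → EuclideanSpace ℝ (Fin n),
      Y = X - D.symm (Ψ X) ↔
        ((∀ i : Fin (T - 1), (i : ℕ) = 0 → Y i = F i x₀) ∧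
         (∀ i : Fin (T - 1), (i : ℕ) ≠ 0 →
            Y i = F i (X ⟨(i : ℕ) - 1, Nat.lt_of_le_of_lt (Nat.sub_le _ _) i.isLt⟩) +
              fderiv ℝ (F i) (X ⟨(i : ℕ) - 1, Nat.lt_of_le_of_lt (Nat.sub_le _ _) i.isLt⟩)
                (Y ⟨(i : ℕ) - 1, Nat.lt_of_le_of_lt (Nat.sub_le _ _) i.isLt⟩ -
                 X ⟨(i : ℕ) - 1, Nat.lt_of_le_of_lt (Nat.sub_le _ _) i.isLt⟩))) := by
  classical
  have hFd : ∀ i, Differentiable ℝ (F i) := fun i => (hF i).differentiable one_ne_zero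
  set p : Fin (T - 1) → Fin (T - 1) := fun i =>
    ⟨(i : ℕ) - 1, Nat.lt_of_le_of_lt (Nat.sub_le _ _) i.isLt⟩ with hp
  set L : (Fin (T - 1) → EuclideanSpace ℝ (Fin n)) →L[ℝ] (Fin (T - 1) → EuclideanSpace ℝ (Fin n)) :=
    ContinuousLinearMap.pi (fun i =>
      (ContinuousLinearMap.proj i : (Fin (T - 1) → EuclideanSpace ℝ (Fin n)) →L[ℝ]
          EuclideanSpace ℝ (Fin n)) -
        if (i : ℕ) = 0 then 0
        else (fderiv ℝ (F i) (X (p i))).comp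
          (ContinuousLinearMap.proj (p i) : (Fin (T - 1) → EuclideanSpace ℝ (Fin n)) →L[ℝ]
            EuclideanSpace ℝ (Fin n))) with hLdef
  have hL : HasFDerivAt Ψ L X := by
    rw [hasFDerivAt_pi']
    intro i
    have hcomp : (fun X' : Fin (T - 1) → EuclideanSpace ℝ (Fin n) => Ψ X' i)
        = fun X' => X' i - F i (if (i : ℕ) = 0 then x₀ else X' (p i)) := by
      funext X'; exact hΨ X' i
    rw [hcomp, hLdef, ContinuousLinearMap.proj_pi]
    by_cases h0 : (i : ℕ) = 0
    · simp only [h0, if_true, sub_zero]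
      exact (ContinuousLinearMap.proj i (R := ℝ)
        (φ := fun _ : Fin (T - 1) => EuclideanSpace ℝ (Fin n))).hasFDerivAt.sub_const _
    · simp only [h0, if_false]
      exact (ContinuousLinearMap.proj i (R := ℝ)
        (φ := fun _ : Fin (T - 1) => EuclideanSpace ℝ (Fin n))).hasFDerivAt.sub
        (((hFd i (X (p i))).hasFDerivAt).comp X
          (ContinuousLinearMap.proj (p i) (R := ℝ)
            (φ := fun _ : Fin (T - 1) => EuclideanSpace ℝ (Fin n))).hasFDerivAt)
  have hDL : (D : (Fin (T - 1) → EuclideanSpace ℝ (Fin n)) →L[ℝ] (Fin (T - 1) → EuclideanSpace ℝ (Fin n))) = L := hD.unique hL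
  have hDL' : (⇑D : (Fin (T - 1) → EuclideanSpace ℝ (Fin n)) → (Fin (T - 1) → EuclideanSpace ℝ (Fin n))) = ⇑L := by
    rw [← ContinuousLinearEquiv.coe_coe, hDL]
  intro Y
  have h1 : (Y = X - D.symm (Ψ X)) ↔ Ψ X = L (X - Y) := by
    rw [eq_sub_iff_add_eq, add_comm, ← eq_sub_iff_add_eq,
      ContinuousLinearEquiv.symm_apply_eq, ← ContinuousLinearEquiv.coe_coe, hDL]
  rw [h1, funext_iff]
  have hLapp : ∀ (v : Fin (T - 1) → EuclideanSpace ℝ (Fin n)) (i : Fin (T - 1)),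
      L v i = v i - (if (i : ℕ) = 0 then (0 : EuclideanSpace ℝ (Fin n))
        else fderiv ℝ (F i) (X (p i)) (v (p i))) := by
    intro v i
    rw [hLdef]
    by_cases h0 : (i : ℕ) = 0 <;>
      simp [ContinuousLinearMap.pi_apply, h0]
  constructor
  · intro h
    constructor
    · intro i h0
      have := h i
      rw [hΨ, hLapp] at this
      simp only [h0, if_true, Pi.sub_apply, sub_zero] at this
      exact (sub_right_injective this).symm
    · intro i h0
      have := h i
      rw [hΨ, hLapp] at this
      simp only [h0, if_false, Pi.sub_apply, map_sub] at this
      -- X i - F i (X (p i)) = X i - Y i - (J (X (p i)) - J (Y (p i)))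
      have hJ : fderiv ℝ (F i) (X (p i)) (Y (p i) - X (p i))
          = fderiv ℝ (F i) (X (p i)) (Y (p i)) - fderiv ℝ (F i) (X (p i)) (X (p i)) :=
        map_sub _ _ _
      rw [hJ]
      have := this
      linear_combination (norm := abel) this
  · rintro ⟨h0, hs⟩ i
    rw [hΨ, hLapp]
    by_cases hi : (i : ℕ) = 0
    · simp only [hi, if_true, Pi.sub_apply, sub_zero, h0 i hi]
    · have := hs i hi
      simp only [hi, if_false, Pi.sub_apply, map_sub]
      rw [this]
      have hJ : fderiv ℝ (F i) (X (p i)) (Y (p i) - X (p i))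
          = fderiv ℝ (F i) (X (p i)) (Y (p i)) - fderiv ℝ (F i) (X (p i)) (X (p i)) :=
        map_sub _ _ _
      rw [hJ]
      abel
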